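/- Let 𝔤 be a nonabelian 2-step nilpotent Lie algebra with a nondegenerate invariant symmetric bilinear form (·,·). Then dim 𝔤 ≥ 6. -/

import Mathlib

open Module Submodule

set_option maxHeartbeats 1000000 in
/-- A non-abelian 2-step nilpotent Lie algebra with a nondegenerate invariant
symmetric bilinear form has dimension at least 6. -/
theorem stmt_18 {L : Type*} [LieRing L] [LieAlgebra ℝ L] [FiniteDimensional ℝ L]
    (B : LinearMap.BilinForm ℝ L)
    (hsymm : ∀ X Y : L, B X Y = B Y X)
    (h2 : ∀ X Y Z : L, ⁅X, ⁅Y, Z⁆⁆ = 0)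
    (hinv : ∀ X Y Z : L, B ⁅X, Y⁆ Z = - B Y ⁅X, Z⁆)
    (hnab : ∃ X Y : L, ⁅X, Y⁆ ≠ 0)
    (hnd : ∀ V : L, (∀ W : L, B V W = 0) → V = 0) :
    6 ≤ Module.finrank ℝ L := by
  classical
  -- the center as a submodule
  set Z : Submodule ℝ L :=
    { carrier := {V : L | ∀ X : L, ⁅X, V⁆ = 0}
      add_mem' := fun {a b} ha hb X => by rw [lie_add, ha X, hb X, add_zero]
      zero_mem' := fun X => lie_zero X
      smul_mem' := fun c v hv X => by rw [lie_smul, hv X, smul_zero] } with hZdef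
  have hZmem : ∀ {V : L}, V ∈ Z ↔ ∀ X : L, ⁅X, V⁆ = 0 := Iff.rfl
  -- the derived subalgebra
  set C : Submodule ℝ L := Submodule.span ℝ {m : L | ∃ x y : L, ⁅x, y⁆ = m} with hCdef
  have hgen : ∀ x y : L, ⁅x, y⁆ ∈ C := fun x y => Submodule.subset_span ⟨x, y, rfl⟩
  have hCZ : C ≤ Z := Submodule.span_le.2 (by rintro m ⟨x, y, rfl⟩ X; exact h2 X x y)
  have hrefl : B.IsRefl := fun x y h => by rw [hsymm]; exact h
  have hndB : B.Nondegenerate := ⟨fun m h => hnd m h, fun m h => hnd m (fun W => by rw [hsymm]; exact h W)⟩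
  -- the orthogonal complement of C is Z
  have horth : B.orthogonal C = Z := by
    ext V
    constructor
    · intro hV
      intro X
      apply hnd
      intro W
      have h1 : B ⁅X, W⁆ V = - B W ⁅X, V⁆ := hinv X W V
      have h0 : B ⁅X, W⁆ V = 0 := hV _ (hgen X W)
      have h3 : B W ⁅X, V⁆ = 0 := by
        have := h1.symm.trans h0
        linarith [this]
      rw [hsymm]; exact h3
    · intro hV n hn
      induction hn using Submodule.span_induction with
      | mem m hm =>
        obtain ⟨x, y, rfl⟩ := hm
        show B ⁅x, y⁆ V = 0
        rw [hinv x y V, hV x, map_zero, neg_zero]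
      | zero => show B 0 V = 0; simp
      | add a b _ _ ha hb => show B (a + b) V = 0; rw [map_add, LinearMap.add_apply, ha, hb, add_zero]
      | smul r a _ ha => show B (r • a) V = 0; rw [map_smul, LinearMap.smul_apply, ha, smul_zero]
  have hdim : finrank ℝ Z = finrank ℝ L - finrank ℝ C := by
    rw [← horth]; exact LinearMap.BilinForm.finrank_orthogonal hndB C
  have hCle : finrank ℝ C ≤ finrank ℝ Z := Submodule.finrank_mono hCZ
  have hquot : finrank ℝ (L ⧸ Z) + finrank ℝ Z = finrank ℝ L :=
    Submodule.finrank_quotient_add_finrank Z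
  have hCfin : finrank ℝ C ≤ finrank ℝ L := Submodule.finrank_le C
  obtain ⟨X0, Y0, hne⟩ := hnab
  have hCpos : 1 ≤ finrank ℝ C := by
    rcases Nat.eq_zero_or_pos (finrank ℝ C) with h | h
    · exfalso
      have : C = ⊥ := Submodule.finrank_eq_zero.mp h
      exact hne (by simpa [this] using hgen X0 Y0)
    · exact h
  -- main claim: finrank C ≥ 3
  have h3 : 3 ≤ finrank ℝ C := by
    by_contra hlt
    push_neg at hlt
    obtain ⟨d, hd⟩ : ∃ d, finrank ℝ (L ⧸ Z) = d := ⟨_, rfl⟩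
    have hQC : finrank ℝ C = d := by omega
    have bQ : Basis (Fin d) ℝ (L ⧸ Z) := finBasisOfFinrankEq ℝ _ hd
    choose X hX using fun i => Submodule.Quotient.mk_surjective Z (bQ i)
    have hsup : Z ⊔ Submodule.span ℝ (Set.range X) = ⊤ := by
      have hmap : Submodule.map Z.mkQ (Submodule.span ℝ (Set.range X)) = ⊤ := by
        rw [Submodule.map_span, ← Set.range_comp]
        have hco : (Z.mkQ ∘ X) = bQ := funext fun i => hX i
        rw [hco, bQ.span_eq]
      rw [← Submodule.comap_map_mkQ, hmap, Submodule.comap_top]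
    have hzlie : ∀ z ∈ Z, ∀ b : L, ⁅z, b⁆ = 0 := by
      intro z hz b
      rw [← lie_skew, hZmem.mp hz b, neg_zero]
    obtain ⟨S, hSdef⟩ : ∃ S : Submodule ℝ L,
        S = Submodule.span ℝ (Set.range fun p : Fin d × Fin d => ⁅X p.1, X p.2⁆) := ⟨_, rfl⟩
    have hkey : ∀ a ∈ Submodule.span ℝ (Set.range X), ∀ b ∈ Submodule.span ℝ (Set.range X),
        ⁅a, b⁆ ∈ S := by
      intro a ha b hb
      induction ha, hb using Submodule.span_induction₂ with
      | mem_mem x y hx hy =>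
        obtain ⟨i, rfl⟩ := hx
        obtain ⟨j, rfl⟩ := hy
        exact hSdef ▸ Submodule.subset_span ⟨(i, j), rfl⟩
      | zero_left y hy => rw [zero_lie]; exact S.zero_mem
      | zero_right x hx => rw [lie_zero]; exact S.zero_mem
      | add_left x y z _ _ _ h1 h2 => rw [add_lie]; exact S.add_mem h1 h2
      | add_right x y z _ _ _ h1 h2 => rw [lie_add]; exact S.add_mem h1 h2
      | smul_left r x y _ _ h1 => rw [smul_lie]; exact S.smul_mem r h1
      | smul_right r x y _ _ h1 => rw [lie_smul]; exact S.smul_mem r h1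
    have hCS : C ≤ S := by
      rw [hCdef, Submodule.span_le]
      rintro m ⟨x, y, rfl⟩
      have hx : x ∈ Z ⊔ Submodule.span ℝ (Set.range X) := hsup ▸ Submodule.mem_top
      have hy : y ∈ Z ⊔ Submodule.span ℝ (Set.range X) := hsup ▸ Submodule.mem_top
      obtain ⟨zx, hzx, ax, hax, rfl⟩ := Submodule.mem_sup.1 hx
      obtain ⟨zy, hzy, ay, hay, rfl⟩ := Submodule.mem_sup.1 hy
      have heq : ⁅zx + ax, zy + ay⁆ = ⁅ax, ay⁆ := by
        simp [add_lie, lie_add, hzlie zx hzx, hZmem.mp hzy ax]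
      rw [heq]
      exact hkey ax hax ay hay
    have hCSle : finrank ℝ C ≤ finrank ℝ S := Submodule.finrank_mono hCS
    obtain hd1 | hd2 : d = 1 ∨ d = 2 := by omega
    · -- d = 1 : S = ⊥
      subst hd1
      have hSbot : S ≤ ⊥ := by
        rw [hSdef, Submodule.span_le]
        rintro m ⟨p, rfl⟩
        have : p.1 = p.2 := Subsingleton.elim _ _
        simp [this]
      have : finrank ℝ S = 0 := by
        rw [le_bot_iff.mp hSbot, finrank_bot]
      omega
    · -- d = 2 : S ≤ span of a single vector
      subst hd2
      have hSle : S ≤ Submodule.span ℝ {⁅X 0, X 1⁆} := by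
        rw [hSdef, Submodule.span_le]
        rintro m ⟨⟨i, j⟩, rfl⟩
        show ⁅X i, X j⁆ ∈ (Submodule.span ℝ {⁅X 0, X 1⁆} : Submodule ℝ L)
        obtain hi | hi : i = 0 ∨ i = 1 := by omega
        all_goals obtain hj | hj : j = 0 ∨ j = 1 := by omega
        all_goals subst hi; subst hj
        · rw [lie_self]; exact Submodule.zero_mem _
        · exact Submodule.subset_span rfl
        · have hskew : ⁅X 1, X 0⁆ = -⁅X 0, X 1⁆ := (lie_skew (X 1) (X 0)).symm
          rw [hskew]
          exact (Submodule.span ℝ {⁅X 0, X 1⁆}).neg_mem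
            (Submodule.mem_span_singleton_self _)
        · rw [lie_self]; exact Submodule.zero_mem _
      have h1 : finrank ℝ (Submodule.span ℝ {⁅X 0, X 1⁆}) ≤ 1 := by
        by_cases hv : ⁅X 0, X 1⁆ = (0 : L)
        · rw [hv, Submodule.span_zero_singleton, finrank_bot]; omega
        · rw [finrank_span_singleton hv]
      have := Submodule.finrank_mono hSle
      omega
  omega
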